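/- The group of level-preserving order automorphisms of the poset Q (bijections α : Q → Q with ℓ(α(x)) = ℓ(x) for all x and with α(x) ≤ α(y) if and only if x ≤ y) is isomorphic to the direct product S₃ × S₂, where the S₃-factor simultaneously permutes the labels {a,b,c} across the three levels (4,2), (3²), (4,1²) (sending x₄₂ ↦ π(x)₄₂, x₃₂ ↦ π(x)₃₂, x₄₁₁ ↦ π(x)₄₁₁ for π ∈ S₃, fixing all elements with label e or f), and the S₂-factor consists of the permutations of {e₄₁₁, f₄₁₁}. -/

import Mathlib

/-- The 15 substitution isomers of cyclopropane with empirical formulae in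
`D = {(6),(5,1),(4,2),(4,1²),(3²)}` (the poset `T₍D;G₎`, `G ≤ S₆` dihedral of
order 6). -/
inductive CycQ : Type
  | a6 | a51 | a42 | b42 | c42 | e42 | a32 | b32 | c32 | e32
  | a411 | b411 | c411 | e411 | f411
  deriving DecidableEq

instance : Fintype CycQ where
  elems := {CycQ.a6, CycQ.a51, CycQ.a42, CycQ.b42, CycQ.c42, CycQ.e42, CycQ.a32, CycQ.b32,
    CycQ.c32, CycQ.e32, CycQ.a411, CycQ.b411, CycQ.c411, CycQ.e411, CycQ.f411}
  complete := by intro x; cases x <;> decide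

open CycQ in
/-- The level function, encoding the levels `(6), (5,1), (4,2), (3²), (4,1²)`
by `5, 4, 3, 2, 1` respectively. -/
def cycLevel : CycQ → ℕ
  | a6 => 5
  | a51 => 4
  | a42 | b42 | c42 | e42 => 3
  | a32 | b32 | c32 | e32 => 2
  | a411 | b411 | c411 | e411 | f411 => 1

open CycQ in
/-- The covering relations of the cyclopropane poset. -/
def cycCovers : List (CycQ × CycQ) :=
  [(a51, a6),
   (a42, a51), (b42, a51), (c42, a51), (e42, a51),
   (b32, a42), (c32, a42),
   (a32, b42), (c32, b42),
   (a32, c42), (b32, c42),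
   (a32, e42), (b32, e42), (c32, e42), (e32, e42),
   (a411, a42), (b411, b42), (c411, c42), (e411, e42), (f411, e42)]

/-- The partial order of the cyclopropane poset: the reflexive-transitive closure
of the covering relations. -/
def cycLE : CycQ → CycQ → Prop :=
  Relation.ReflTransGen (fun x y => (x, y) ∈ cycCovers)

/-- The group of level-preserving order automorphisms of the cyclopropane poset. -/
def cycAut : Subgroup (Equiv.Perm CycQ) where
  carrier := {α | (∀ x, cycLevel (α x) = cycLevel x) ∧
    ∀ x y, cycLE (α x) (α y) ↔ cycLE x y}
  one_mem' := by
    constructor <;> simp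
  mul_mem' := by
    rintro α β ⟨hα1, hα2⟩ ⟨hβ1, hβ2⟩
    constructor
    · intro x
      simp only [Equiv.Perm.mul_apply]
      rw [hα1, hβ1]
    · intro x y
      simp only [Equiv.Perm.mul_apply]
      rw [hα2, hβ2]
  inv_mem' := by
    rintro α ⟨hα1, hα2⟩
    constructor
    · intro x
      conv_rhs => rw [← (show α (α⁻¹ x) = x from α.apply_symm_apply x)]
      rw [hα1]
    · intro x y
      conv_rhs => rw [← (show α (α⁻¹ x) = x from α.apply_symm_apply x),
        ← (show α (α⁻¹ y) = y from α.apply_symm_apply y)]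
      rw [hα2]

/-- The `(4,2)`-row indexed by `{a, b, c}` (with `e₄₂` separate). -/
def cyc42 : Fin 3 → CycQ := ![CycQ.a42, CycQ.b42, CycQ.c42]

/-- The `(3²)`-row indexed by `{a, b, c}` (with `e₃₂` separate). -/
def cyc32 : Fin 3 → CycQ := ![CycQ.a32, CycQ.b32, CycQ.c32]

/-- The `(4,1²)`-row indexed by `{a, b, c}` (with `e₄₁₁`, `f₄₁₁` separate). -/
def cyc411 : Fin 3 → CycQ := ![CycQ.a411, CycQ.b411, CycQ.c411]

/-- The pair `{e₄₁₁, f₄₁₁}`. -/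
def cycEF : Fin 2 → CycQ := ![CycQ.e411, CycQ.f411]

open CycQ in
def cycPairs : List (CycQ × CycQ) :=
  [(CycQ.a51, CycQ.a6),
   (CycQ.a42, CycQ.a51),
   (CycQ.b42, CycQ.a51),
   (CycQ.c42, CycQ.a51),
   (CycQ.e42, CycQ.a51),
   (CycQ.b32, CycQ.a42),
   (CycQ.c32, CycQ.a42),
   (CycQ.a32, CycQ.b42),
   (CycQ.c32, CycQ.b42),
   (CycQ.a32, CycQ.c42),
   (CycQ.b32, CycQ.c42),
   (CycQ.a32, CycQ.e42),
   (CycQ.b32, CycQ.e42),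
   (CycQ.c32, CycQ.e42),
   (CycQ.e32, CycQ.e42),
   (CycQ.a411, CycQ.a42),
   (CycQ.b411, CycQ.b42),
   (CycQ.c411, CycQ.c42),
   (CycQ.e411, CycQ.e42),
   (CycQ.f411, CycQ.e42),
   (CycQ.a42, CycQ.a6), (CycQ.b42, CycQ.a6), (CycQ.c42, CycQ.a6), (CycQ.e42, CycQ.a6),
   (CycQ.a32, CycQ.a51), (CycQ.a32, CycQ.a6), (CycQ.b32, CycQ.a51), (CycQ.b32, CycQ.a6),
   (CycQ.c32, CycQ.a51), (CycQ.c32, CycQ.a6), (CycQ.e32, CycQ.a51), (CycQ.e32, CycQ.a6),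
   (CycQ.a411, CycQ.a51), (CycQ.a411, CycQ.a6), (CycQ.b411, CycQ.a51), (CycQ.b411, CycQ.a6),
   (CycQ.c411, CycQ.a51), (CycQ.c411, CycQ.a6), (CycQ.e411, CycQ.a51), (CycQ.e411, CycQ.a6),
   (CycQ.f411, CycQ.a51), (CycQ.f411, CycQ.a6)]

def cycLE' (x y : CycQ) : Bool := x = y || (x, y) ∈ cycPairs

lemma cycLE'_refl : ∀ x, cycLE' x x = true := by decide

lemma cycLE'_step : ∀ x b c : CycQ, cycLE' x b = true → (b, c) ∈ cycCovers → cycLE' x c = true := by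
  decide


lemma le_a51_a6 : cycLE CycQ.a51 CycQ.a6 := Relation.ReflTransGen.single (by decide)
lemma le_a42_a51 : cycLE CycQ.a42 CycQ.a51 := Relation.ReflTransGen.single (by decide)
lemma le_b42_a51 : cycLE CycQ.b42 CycQ.a51 := Relation.ReflTransGen.single (by decide)
lemma le_c42_a51 : cycLE CycQ.c42 CycQ.a51 := Relation.ReflTransGen.single (by decide)
lemma le_e42_a51 : cycLE CycQ.e42 CycQ.a51 := Relation.ReflTransGen.single (by decide)
lemma le_b32_a42 : cycLE CycQ.b32 CycQ.a42 := Relation.ReflTransGen.single (by decide)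
lemma le_c32_a42 : cycLE CycQ.c32 CycQ.a42 := Relation.ReflTransGen.single (by decide)
lemma le_a32_b42 : cycLE CycQ.a32 CycQ.b42 := Relation.ReflTransGen.single (by decide)
lemma le_c32_b42 : cycLE CycQ.c32 CycQ.b42 := Relation.ReflTransGen.single (by decide)
lemma le_a32_c42 : cycLE CycQ.a32 CycQ.c42 := Relation.ReflTransGen.single (by decide)
lemma le_b32_c42 : cycLE CycQ.b32 CycQ.c42 := Relation.ReflTransGen.single (by decide)
lemma le_a32_e42 : cycLE CycQ.a32 CycQ.e42 := Relation.ReflTransGen.single (by decide)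
lemma le_b32_e42 : cycLE CycQ.b32 CycQ.e42 := Relation.ReflTransGen.single (by decide)
lemma le_c32_e42 : cycLE CycQ.c32 CycQ.e42 := Relation.ReflTransGen.single (by decide)
lemma le_e32_e42 : cycLE CycQ.e32 CycQ.e42 := Relation.ReflTransGen.single (by decide)
lemma le_a411_a42 : cycLE CycQ.a411 CycQ.a42 := Relation.ReflTransGen.single (by decide)
lemma le_b411_b42 : cycLE CycQ.b411 CycQ.b42 := Relation.ReflTransGen.single (by decide)
lemma le_c411_c42 : cycLE CycQ.c411 CycQ.c42 := Relation.ReflTransGen.single (by decide)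
lemma le_e411_e42 : cycLE CycQ.e411 CycQ.e42 := Relation.ReflTransGen.single (by decide)
lemma le_f411_e42 : cycLE CycQ.f411 CycQ.e42 := Relation.ReflTransGen.single (by decide)
lemma le_a42_a6 : cycLE CycQ.a42 CycQ.a6 := (le_a42_a51.trans le_a51_a6)
lemma le_b42_a6 : cycLE CycQ.b42 CycQ.a6 := (le_b42_a51.trans le_a51_a6)
lemma le_c42_a6 : cycLE CycQ.c42 CycQ.a6 := (le_c42_a51.trans le_a51_a6)
lemma le_e42_a6 : cycLE CycQ.e42 CycQ.a6 := (le_e42_a51.trans le_a51_a6)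
lemma le_a32_a51 : cycLE CycQ.a32 CycQ.a51 := (le_a32_b42.trans le_b42_a51)
lemma le_a32_a6 : cycLE CycQ.a32 CycQ.a6 := ((le_a32_b42.trans le_b42_a51).trans le_a51_a6)
lemma le_b32_a51 : cycLE CycQ.b32 CycQ.a51 := (le_b32_a42.trans le_a42_a51)
lemma le_b32_a6 : cycLE CycQ.b32 CycQ.a6 := ((le_b32_a42.trans le_a42_a51).trans le_a51_a6)
lemma le_c32_a51 : cycLE CycQ.c32 CycQ.a51 := (le_c32_a42.trans le_a42_a51)
lemma le_c32_a6 : cycLE CycQ.c32 CycQ.a6 := ((le_c32_a42.trans le_a42_a51).trans le_a51_a6)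
lemma le_e32_a51 : cycLE CycQ.e32 CycQ.a51 := (le_e32_e42.trans le_e42_a51)
lemma le_e32_a6 : cycLE CycQ.e32 CycQ.a6 := ((le_e32_e42.trans le_e42_a51).trans le_a51_a6)
lemma le_a411_a51 : cycLE CycQ.a411 CycQ.a51 := (le_a411_a42.trans le_a42_a51)
lemma le_a411_a6 : cycLE CycQ.a411 CycQ.a6 := ((le_a411_a42.trans le_a42_a51).trans le_a51_a6)
lemma le_b411_a51 : cycLE CycQ.b411 CycQ.a51 := (le_b411_b42.trans le_b42_a51)
lemma le_b411_a6 : cycLE CycQ.b411 CycQ.a6 := ((le_b411_b42.trans le_b42_a51).trans le_a51_a6)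
lemma le_c411_a51 : cycLE CycQ.c411 CycQ.a51 := (le_c411_c42.trans le_c42_a51)
lemma le_c411_a6 : cycLE CycQ.c411 CycQ.a6 := ((le_c411_c42.trans le_c42_a51).trans le_a51_a6)
lemma le_e411_a51 : cycLE CycQ.e411 CycQ.a51 := (le_e411_e42.trans le_e42_a51)
lemma le_e411_a6 : cycLE CycQ.e411 CycQ.a6 := ((le_e411_e42.trans le_e42_a51).trans le_a51_a6)
lemma le_f411_a51 : cycLE CycQ.f411 CycQ.a51 := (le_f411_e42.trans le_e42_a51)
lemma le_f411_a6 : cycLE CycQ.f411 CycQ.a6 := ((le_f411_e42.trans le_e42_a51).trans le_a51_a6)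

lemma cycLE_back : ∀ x y : CycQ, cycLE' x y = true → cycLE x y := by
  intro x y
  cases x <;> cases y <;> intro h <;>
    first
      | exact Relation.ReflTransGen.refl
      | exact absurd h (by decide)
      | exact le_a51_a6
      | exact le_a42_a51
      | exact le_b42_a51
      | exact le_c42_a51
      | exact le_e42_a51
      | exact le_b32_a42
      | exact le_c32_a42
      | exact le_a32_b42
      | exact le_c32_b42
      | exact le_a32_c42
      | exact le_b32_c42
      | exact le_a32_e42
      | exact le_b32_e42
      | exact le_c32_e42
      | exact le_e32_e42
      | exact le_a411_a42
      | exact le_b411_b42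
      | exact le_c411_c42
      | exact le_e411_e42
      | exact le_f411_e42
      | exact le_a42_a6
      | exact le_b42_a6
      | exact le_c42_a6
      | exact le_e42_a6
      | exact le_a32_a51
      | exact le_a32_a6
      | exact le_b32_a51
      | exact le_b32_a6
      | exact le_c32_a51
      | exact le_c32_a6
      | exact le_e32_a51
      | exact le_e32_a6
      | exact le_a411_a51
      | exact le_a411_a6
      | exact le_b411_a51
      | exact le_b411_a6
      | exact le_c411_a51
      | exact le_c411_a6
      | exact le_e411_a51
      | exact le_e411_a6
      | exact le_f411_a51
      | exact le_f411_a6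

lemma cycLE_iff : ∀ x y : CycQ, cycLE x y ↔ cycLE' x y = true := by
  intro x y
  constructor
  · intro h
    induction h with
    | refl => exact cycLE'_refl x
    | tail _ hbc ih => exact cycLE'_step _ _ _ ih hbc
  · exact cycLE_back x y
open CycQ in
def cycFun (π : Equiv.Perm (Fin 3)) (ρ : Equiv.Perm (Fin 2)) : CycQ → CycQ
  | a6 => a6
  | a51 => a51
  | e42 => e42
  | e32 => e32
  | a42 => cyc42 (π 0)
  | b42 => cyc42 (π 1)
  | c42 => cyc42 (π 2)
  | a32 => cyc32 (π 0)
  | b32 => cyc32 (π 1)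
  | c32 => cyc32 (π 2)
  | a411 => cyc411 (π 0)
  | b411 => cyc411 (π 1)
  | c411 => cyc411 (π 2)
  | e411 => cycEF (ρ 0)
  | f411 => cycEF (ρ 1)

lemma cycFun_left_inv : ∀ (π : Equiv.Perm (Fin 3)) (ρ : Equiv.Perm (Fin 2)) (x : CycQ),
    cycFun π⁻¹ ρ⁻¹ (cycFun π ρ x) = x := by decide

lemma cycFun_level : ∀ (π : Equiv.Perm (Fin 3)) (ρ : Equiv.Perm (Fin 2)) (x : CycQ),
    cycLevel (cycFun π ρ x) = cycLevel x := by decide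

set_option maxHeartbeats 2000000 in
lemma cycFun_LE' : ∀ (π : Equiv.Perm (Fin 3)) (ρ : Equiv.Perm (Fin 2)) (x y : CycQ),
    cycLE' (cycFun π ρ x) (cycFun π ρ y) = cycLE' x y := by decide

lemma cycFun_mul : ∀ (π₁ π₂ : Equiv.Perm (Fin 3)) (ρ₁ ρ₂ : Equiv.Perm (Fin 2)) (x : CycQ),
    cycFun (π₁ * π₂) (ρ₁ * ρ₂) x = cycFun π₁ ρ₁ (cycFun π₂ ρ₂ x) := by decide
def cycPerm (π : Equiv.Perm (Fin 3)) (ρ : Equiv.Perm (Fin 2)) : Equiv.Perm CycQ where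
  toFun := cycFun π ρ
  invFun := cycFun π⁻¹ ρ⁻¹
  left_inv x := cycFun_left_inv π ρ x
  right_inv x := by
    have := cycFun_left_inv π⁻¹ ρ⁻¹ x
    rwa [inv_inv, inv_inv] at this

lemma cycPerm_mem (π : Equiv.Perm (Fin 3)) (ρ : Equiv.Perm (Fin 2)) :
    cycPerm π ρ ∈ cycAut := by
  refine ⟨fun x => cycFun_level π ρ x, fun x y => ?_⟩
  rw [cycLE_iff, cycLE_iff]
  show cycLE' (cycFun π ρ x) (cycFun π ρ y) = true ↔ _
  rw [cycFun_LE' π ρ x y]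

lemma cycFun_one : ∀ x, cycFun 1 1 x = x := by decide

def cycHom : Equiv.Perm (Fin 3) × Equiv.Perm (Fin 2) →* cycAut where
  toFun p := ⟨cycPerm p.1 p.2, cycPerm_mem p.1 p.2⟩
  map_one' := by
    ext x
    exact cycFun_one x
  map_mul' p q := by
    ext x
    show cycFun (p.1 * q.1) (p.2 * q.2) x = cycFun p.1 p.2 (cycFun q.1 q.2 x)
    exact cycFun_mul _ _ _ _ x

lemma level5_eq : ∀ x, cycLevel x = 5 → x = CycQ.a6 := by decide
lemma level4_eq : ∀ x, cycLevel x = 4 → x = CycQ.a51 := by decide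
lemma level2_le_e42 : ∀ x, cycLevel x = 2 → cycLE' x CycQ.e42 = true := by decide
lemma e42_unique : ∀ z, cycLevel z = 3 → cycLE' CycQ.a32 z = true → cycLE' CycQ.b32 z = true →
    cycLE' CycQ.c32 z = true → cycLE' CycQ.e32 z = true → z = CycQ.e42 := by decide
lemma e32_above : ∀ v, cycLevel v = 3 → cycLE' CycQ.e32 v = true → v = CycQ.e42 := by decide
lemma e32_unique : ∀ u, cycLevel u = 2 → cycLE' u CycQ.a42 = false → cycLE' u CycQ.b42 = false →
    cycLE' u CycQ.c42 = false → u = CycQ.e32 := by decide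
lemma level3_ne_e42 : ∀ z, cycLevel z = 3 → z ≠ CycQ.e42 → ∃ j, cyc42 j = z := by decide
lemma level1_le_e42 : ∀ u, cycLevel u = 1 → cycLE' u CycQ.e42 = true → ∃ j, cycEF j = u := by decide
lemma row32_unique : ∀ u (k : Fin 3), cycLevel u = 2 → u ≠ CycQ.e32 →
    cycLE' u (cyc42 k) = false → u = cyc32 k := by decide
lemma row411_unique : ∀ u (k : Fin 3), cycLevel u = 1 →
    cycLE' u (cyc42 k) = true → u = cyc411 k := by decide
lemma cyc42_inj : ∀ i j : Fin 3, cyc42 i = cyc42 j → i = j := by decide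
lemma cycEF_inj : ∀ i j : Fin 2, cycEF i = cycEF j → i = j := by decide
lemma cyc42_level : ∀ i, cycLevel (cyc42 i) = 3 := by decide
lemma cyc32_level : ∀ i, cycLevel (cyc32 i) = 2 := by decide
lemma cyc411_level : ∀ i, cycLevel (cyc411 i) = 1 := by decide
lemma cycEF_level : ∀ j, cycLevel (cycEF j) = 1 := by decide
lemma cyc42_ne_e42 : ∀ i, cyc42 i ≠ CycQ.e42 := by decide
lemma cyc32_ne_e32 : ∀ i, cyc32 i ≠ CycQ.e32 := by decide
lemma row32_not_le : ∀ i, cycLE' (cyc32 i) (cyc42 i) = false := by decide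
lemma row411_le : ∀ i, cycLE' (cyc411 i) (cyc42 i) = true := by decide
lemma EF_le_e42 : ∀ j, cycLE' (cycEF j) CycQ.e42 = true := by decide

lemma cycFun_cyc42 : ∀ (π : Equiv.Perm (Fin 3)) (ρ : Equiv.Perm (Fin 2)) i,
    cycFun π ρ (cyc42 i) = cyc42 (π i) := by
  intro π ρ i; fin_cases i <;> rfl
lemma cycFun_cyc32 : ∀ (π : Equiv.Perm (Fin 3)) (ρ : Equiv.Perm (Fin 2)) i,
    cycFun π ρ (cyc32 i) = cyc32 (π i) := by
  intro π ρ i; fin_cases i <;> rfl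
lemma cycFun_cyc411 : ∀ (π : Equiv.Perm (Fin 3)) (ρ : Equiv.Perm (Fin 2)) i,
    cycFun π ρ (cyc411 i) = cyc411 (π i) := by
  intro π ρ i; fin_cases i <;> rfl
lemma cycFun_cycEF : ∀ (π : Equiv.Perm (Fin 3)) (ρ : Equiv.Perm (Fin 2)) j,
    cycFun π ρ (cycEF j) = cycEF (ρ j) := by
  intro π ρ j; fin_cases j <;> rfl

lemma cycHom_injective : Function.Injective cycHom := by
  rw [injective_iff_map_eq_one]
  rintro ⟨π, ρ⟩ h
  have h' : ∀ x, cycFun π ρ x = x := by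
    intro x
    have := congrArg (fun (β : cycAut) => (β : Equiv.Perm CycQ) x) h
    exact this
  have hπ : π = 1 := by
    ext i
    fin_cases i
    · exact congrArg Fin.val <| cyc42_inj _ _ ((cycFun_cyc42 π ρ 0).symm.trans (h' (cyc42 0)))
    · exact congrArg Fin.val <| cyc42_inj _ _ ((cycFun_cyc42 π ρ 1).symm.trans (h' (cyc42 1)))
    · exact congrArg Fin.val <| cyc42_inj _ _ ((cycFun_cyc42 π ρ 2).symm.trans (h' (cyc42 2)))
  have hρ : ρ = 1 := by
    ext j
    fin_cases j
    · exact congrArg Fin.val <| cycEF_inj _ _ ((cycFun_cycEF π ρ 0).symm.trans (h' (cycEF 0)))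
    · exact congrArg Fin.val <| cycEF_inj _ _ ((cycFun_cycEF π ρ 1).symm.trans (h' (cycEF 1)))
  rw [hπ, hρ]; rfl

lemma cycHom_surjective : Function.Surjective cycHom := by
  rintro ⟨α, hL, hO⟩
  have hO' : ∀ x y, cycLE' (α x) (α y) = cycLE' x y := by
    intro x y
    have h := hO x y
    rw [cycLE_iff, cycLE_iff] at h
    cases hx : cycLE' (α x) (α y) <;> cases hy : cycLE' x y <;> simp_all
  have hLinv : ∀ x, cycLevel (α⁻¹ x) = cycLevel x := by
    intro x
    have := hL (α⁻¹ x)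
    rw [(show α (α⁻¹ x) = x from α.apply_symm_apply x)] at this
    exact this.symm
  have he42 : α CycQ.e42 = CycQ.e42 := by
    have key : ∀ w, cycLevel w = 2 → cycLE' w (α CycQ.e42) = true := by
      intro w hw
      have h1 : cycLevel (α⁻¹ w) = 2 := by rw [hLinv]; exact hw
      have h2 := level2_le_e42 _ h1
      have h3 := hO' (α⁻¹ w) CycQ.e42
      rw [(show α (α⁻¹ w) = w from α.apply_symm_apply w), h2] at h3
      exact h3
    exact e42_unique _ (hL _) (key _ rfl) (key _ rfl) (key _ rfl) (key _ rfl)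
  have he32 : α CycQ.e32 = CycQ.e32 := by
    have hfix3 : ∀ t : CycQ, cycLevel t = 3 → cycLE' (α CycQ.e32) t = true → t = CycQ.e42 := by
      intro t hlt hle
      have hvl : cycLevel (α⁻¹ t) = 3 := by rw [hLinv]; exact hlt
      have h3 := hO' CycQ.e32 (α⁻¹ t)
      rw [(show α (α⁻¹ t) = t from α.apply_symm_apply t), hle] at h3
      have hv := e32_above _ hvl h3.symm
      rw [← he42, ← hv, (show α (α⁻¹ t) = t from α.apply_symm_apply t)]
    refine e32_unique _ (hL _) ?_ ?_ ?_ <;>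
      [skip; skip; skip] <;>
      · by_contra hb
        rw [Bool.not_eq_false] at hb
        first
          | exact (by decide : CycQ.a42 ≠ CycQ.e42) (hfix3 _ rfl hb)
          | exact (by decide : CycQ.b42 ≠ CycQ.e42) (hfix3 _ rfl hb)
          | exact (by decide : CycQ.c42 ≠ CycQ.e42) (hfix3 _ rfl hb)
  have h42mem : ∀ i : Fin 3, ∃ j, cyc42 j = α (cyc42 i) := by
    intro i
    refine level3_ne_e42 _ (by rw [hL]; exact cyc42_level i) ?_
    intro h
    exact cyc42_ne_e42 i (α.injective (h.trans he42.symm))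
  choose f hf using h42mem
  have finj : Function.Injective f := by
    intro i j hij
    refine cyc42_inj _ _ (α.injective ?_)
    rw [← hf i, ← hf j, hij]
  let π : Equiv.Perm (Fin 3) := Equiv.ofBijective f (Finite.injective_iff_bijective.mp finj)
  have hEFmem : ∀ j : Fin 2, ∃ k, cycEF k = α (cycEF j) := by
    intro j
    refine level1_le_e42 _ (by rw [hL]; exact cycEF_level j) ?_
    have h3 := hO' (cycEF j) CycQ.e42
    rw [he42, EF_le_e42 j] at h3
    exact h3
  choose g hg using hEFmem
  have ginj : Function.Injective g := by
    intro i j hij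
    refine cycEF_inj _ _ (α.injective ?_)
    rw [← hg i, ← hg j, hij]
  let ρ : Equiv.Perm (Fin 2) := Equiv.ofBijective g (Finite.injective_iff_bijective.mp ginj)
  have hval42 : ∀ i, α (cyc42 i) = cyc42 (f i) := fun i => (hf i).symm
  have hval32 : ∀ i, α (cyc32 i) = cyc32 (f i) := by
    intro i
    refine row32_unique _ _ (by rw [hL]; exact cyc32_level i) ?_ ?_
    · intro h
      exact cyc32_ne_e32 i (α.injective (h.trans he32.symm))
    · have h3 := hO' (cyc32 i) (cyc42 i)
      rw [row32_not_le i, hval42 i] at h3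
      exact h3
  have hval411 : ∀ i, α (cyc411 i) = cyc411 (f i) := by
    intro i
    refine row411_unique _ _ (by rw [hL]; exact cyc411_level i) ?_
    have h3 := hO' (cyc411 i) (cyc42 i)
    rw [row411_le i, hval42 i] at h3
    exact h3
  have hvalEF : ∀ j, α (cycEF j) = cycEF (g j) := fun j => (hg j).symm
  have ha6 : α CycQ.a6 = CycQ.a6 := level5_eq _ (hL _)
  have ha51 : α CycQ.a51 = CycQ.a51 := level4_eq _ (hL _)
  refine ⟨(π, ρ), ?_⟩
  apply Subtype.ext
  show cycPerm π ρ = α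
  ext x
  show cycFun π ρ x = α x
  have hπ : ∀ i, π i = f i := fun i => rfl
  have hρ : ∀ j, ρ j = g j := fun j => rfl
  cases x
  · exact ha6.symm
  · exact ha51.symm
  · exact ((cycFun_cyc42 π ρ 0).trans ((congrArg cyc42 (hπ 0)).trans (hval42 0).symm))
  · exact ((cycFun_cyc42 π ρ 1).trans ((congrArg cyc42 (hπ 1)).trans (hval42 1).symm))
  · exact ((cycFun_cyc42 π ρ 2).trans ((congrArg cyc42 (hπ 2)).trans (hval42 2).symm))
  · exact he42.symm
  · exact ((cycFun_cyc32 π ρ 0).trans ((congrArg cyc32 (hπ 0)).trans (hval32 0).symm))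
  · exact ((cycFun_cyc32 π ρ 1).trans ((congrArg cyc32 (hπ 1)).trans (hval32 1).symm))
  · exact ((cycFun_cyc32 π ρ 2).trans ((congrArg cyc32 (hπ 2)).trans (hval32 2).symm))
  · exact he32.symm
  · exact ((cycFun_cyc411 π ρ 0).trans ((congrArg cyc411 (hπ 0)).trans (hval411 0).symm))
  · exact ((cycFun_cyc411 π ρ 1).trans ((congrArg cyc411 (hπ 1)).trans (hval411 1).symm))
  · exact ((cycFun_cyc411 π ρ 2).trans ((congrArg cyc411 (hπ 2)).trans (hval411 2).symm))
  · exact ((cycFun_cycEF π ρ 0).trans ((congrArg cycEF (hρ 0)).trans (hvalEF 0).symm))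
  · exact ((cycFun_cycEF π ρ 1).trans ((congrArg cycEF (hρ 1)).trans (hvalEF 1).symm))

/-- The group of level-preserving order automorphisms of the
cyclopropane poset is isomorphic to `S₃ × S₂`, where the `S₃`-factor
simultaneously permutes the labels `{a,b,c}` across the levels `(4,2)`, `(3²)`,
`(4,1²)` (fixing all elements labelled `e` or `f`), and the `S₂`-factor consists
of the permutations of `{e₄₁₁, f₄₁₁}`. -/
theorem lunn_senior_stmt18 :
    ∃ Φ : Equiv.Perm (Fin 3) × Equiv.Perm (Fin 2) ≃* cycAut,
      ∀ (π : Equiv.Perm (Fin 3)) (ρ : Equiv.Perm (Fin 2)),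
        ((Φ (π, ρ) : Equiv.Perm CycQ) CycQ.a6 = CycQ.a6) ∧
        ((Φ (π, ρ) : Equiv.Perm CycQ) CycQ.a51 = CycQ.a51) ∧
        ((Φ (π, ρ) : Equiv.Perm CycQ) CycQ.e42 = CycQ.e42) ∧
        ((Φ (π, ρ) : Equiv.Perm CycQ) CycQ.e32 = CycQ.e32) ∧
        (∀ i, (Φ (π, ρ) : Equiv.Perm CycQ) (cyc42 i) = cyc42 (π i)) ∧
        (∀ i, (Φ (π, ρ) : Equiv.Perm CycQ) (cyc32 i) = cyc32 (π i)) ∧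
        (∀ i, (Φ (π, ρ) : Equiv.Perm CycQ) (cyc411 i) = cyc411 (π i)) ∧
        (∀ j, (Φ (π, ρ) : Equiv.Perm CycQ) (cycEF j) = cycEF (ρ j)) := by
  refine ⟨MulEquiv.ofBijective cycHom ⟨cycHom_injective, cycHom_surjective⟩, ?_⟩
  intro π ρ
  exact ⟨rfl, rfl, rfl, rfl, cycFun_cyc42 π ρ, cycFun_cyc32 π ρ, cycFun_cyc411 π ρ,
    cycFun_cycEF π ρ⟩
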